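/- Let S ⋈ G be a terminating ordered join and σ : S → S a weakly order-preserving involution without fixed points such that Γ₁(G_i) = Γ₁(G_{σ(i)}) for all i ∈ S. Then Γ₀(S ⋈ G) = 0, i.e., the ordered join is a previous-player win. -/

import Mathlib

universe u

/-- Combinatorial game theory (`SetTheory.PGame`, `Nimber`, `grundyValue`, `Impartial`) was
removed from Mathlib; the notions are redefined here with their old meaning. -/
def Nimber : Type (u + 1) := Ordinal.{u}

namespace Nimber
instance : Zero Nimber.{u} := ⟨(0 : Ordinal.{u})⟩
end Nimber

namespace SetTheory

inductive PGame : Type (u + 1)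
  | mk : ∀ α β : Type u, (α → PGame) → (β → PGame) → PGame

namespace PGame

def LeftMoves : PGame.{u} → Type u
  | mk l _ _ _ => l

def RightMoves : PGame.{u} → Type u
  | mk _ r _ _ => r

def moveLeft : ∀ g : PGame.{u}, LeftMoves g → PGame.{u}
  | mk _ _ L _ => L

def moveRight : ∀ g : PGame.{u}, RightMoves g → PGame.{u}
  | mk _ _ _ R => R

instance : Zero PGame.{u} := ⟨⟨PEmpty, PEmpty, PEmpty.elim, PEmpty.elim⟩⟩

def neg : PGame.{u} → PGame.{u}
  | mk l r L R => mk r l (fun j => neg (R j)) (fun i => neg (L i))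

instance : Neg PGame.{u} := ⟨neg⟩

/-- For fixed `x` (given the relations for its options), computes `(x ≤ y, y ≤ x)` by recursion
on `y`, where `x ≤ y ↔ (∀ i, ¬ y ≤ x.moveLeft i) ∧ ∀ j, ¬ y.moveRight j ≤ x`. -/
def leGeAux (x : PGame.{u}) (geL : x.LeftMoves → PGame.{u} → Prop)
    (leR : x.RightMoves → PGame.{u} → Prop) : PGame.{u} → Prop × Prop
  | mk yl yr yL yR =>
    ((∀ i, ¬ geL i (mk yl yr yL yR)) ∧ ∀ j, ¬ (leGeAux x geL leR (yR j)).2,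
     (∀ i, ¬ (leGeAux x geL leR (yL i)).1) ∧ ∀ j, ¬ leR j (mk yl yr yL yR))

/-- `lePair x = (fun y => x ≤ y, fun y => y ≤ x)`. -/
def lePair : PGame.{u} → (PGame.{u} → Prop) × (PGame.{u} → Prop)
  | mk xl xr xL xR =>
    (fun y => (leGeAux (mk xl xr xL xR) (fun i => (lePair (xL i)).2)
        (fun j => (lePair (xR j)).1) y).1,
     fun y => (leGeAux (mk xl xr xL xR) (fun i => (lePair (xL i)).2)
        (fun j => (lePair (xR j)).1) y).2)

instance : LE PGame.{u} := ⟨fun x y => (lePair x).1 y⟩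

def Equiv (x y : PGame.{u}) : Prop := x ≤ y ∧ y ≤ x

instance : HasEquiv PGame.{u} := ⟨Equiv⟩

def ImpartialAux : PGame.{u} → Prop
  | mk l r L R => (mk l r L R ≈ -mk l r L R) ∧ (∀ i, ImpartialAux (L i)) ∧
      ∀ j, ImpartialAux (R j)

class Impartial (G : PGame.{u}) : Prop where
  out : ImpartialAux G

noncomputable def grundyValueAux : PGame.{u} → Ordinal.{u}
  | mk _ _ L _ => sInf (Set.range fun i => grundyValueAux (L i))ᶜ

/-- The Grundy value: the mex of the Grundy values of the (left) options. -/
noncomputable def grundyValue (G : PGame.{u}) : Nimber.{u} := grundyValueAux G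

end PGame

end SetTheory

open SetTheory PGame Nimber

noncomputable section
open Classical in
/-- The state resulting from a (Left) move in component `i₀` of an ordered join:
all components strictly above `i₀` are replaced by the empty game `0`. -/
def ojNextL {S : Type} [PartialOrder S] (x : S → PGame) (i₀ : S) (j : (x i₀).LeftMoves) :
    S → PGame :=
  fun i => if i = i₀ then (x i₀).moveLeft j else if i₀ < i then 0 else x i

open Classical in
def ojNextR {S : Type} [PartialOrder S] (x : S → PGame) (i₀ : S) (j : (x i₀).RightMoves) :
    S → PGame :=
  fun i => if i = i₀ then (x i₀).moveRight j else if i₀ < i then 0 else x i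

/-- The move relation of the ordered join: `OJRel y x` iff `y` results from `x` by a single move. -/
def OJRel {S : Type} [PartialOrder S] (y x : S → PGame) : Prop :=
  (∃ i₀ j, y = ojNextL x i₀ j) ∨ (∃ i₀ j, y = ojNextR x i₀ j)

theorem ojrel_L {S : Type} [PartialOrder S] (x : S → PGame) (i₀ : S) (j : (x i₀).LeftMoves) :
    OJRel (ojNextL x i₀ j) x := Or.inl ⟨i₀, j, rfl⟩

theorem ojrel_R {S : Type} [PartialOrder S] (x : S → PGame) (i₀ : S) (j : (x i₀).RightMoves) :
    OJRel (ojNextR x i₀ j) x := Or.inr ⟨i₀, j, rfl⟩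

/-- The ordered join of a family of games, as a game, given a termination certificate. -/
def ojoinAcc {S : Type} [PartialOrder S] : ∀ x : S → PGame, Acc OJRel x → PGame := fun x h =>
  Acc.rec (motive := fun x _ => PGame)
    (fun x _ ih =>
      PGame.mk (Σ i₀ : S, (x i₀).LeftMoves) (Σ i₀ : S, (x i₀).RightMoves)
        (fun p => ih _ (ojrel_L x p.1 p.2))
        (fun p => ih _ (ojrel_R x p.1 p.2))) h

open Classical in
/-- The ordered join `S ⋈ G` of a family of games `G` over the poset `S`.
(Defined as `0` in the degenerate non-terminating case.) -/
def ojoin {S : Type} [PartialOrder S] (x : S → PGame) : PGame :=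
  if h : Acc OJRel x then ojoinAcc x h else 0

/-- The Grundy set `Γ₁(G)`: the set of Grundy numbers of the options of `G`. -/
def grundySet (G : PGame) : Set Nimber :=
  Set.range fun i => grundyValue (G.moveLeft i)
end

/-- An involution `σ` of a poset is weakly order-preserving if for each `i` the upper set
`{ j | i < j ∨ σ i < j }` is `σ`-invariant. -/
def WeaklyOrderPreserving {S : Type} [PartialOrder S] (σ : S → S) : Prop :=
  ∀ i : S, σ '' {j | i < j ∨ σ i < j} = {j | i < j ∨ σ i < j}

noncomputable instance instLinearOrderNimberPort : LinearOrder Nimber.{u} :=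
  inferInstanceAs (LinearOrder Ordinal.{u})

theorem Nimber.not_lt_zero (a : Nimber.{u}) : ¬ a < 0 := by
  have h0 : (0 : Ordinal.{u}) ≤ (a : Ordinal.{u}) := zero_le
  intro h; exact absurd h (not_lt_of_ge h0)

private lemma gvAux_eq (G : PGame.{u}) :
    grundyValueAux G = sInf (Set.range fun i => grundyValueAux (G.moveLeft i))ᶜ := by
  cases G; rfl

private lemma gvAux_compl (G : PGame.{u}) :
    (Set.range fun i => grundyValueAux (G.moveLeft i))ᶜ.Nonempty :=
  Ordinal.nonempty_compl_range.{u, u} _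

theorem grundyValue_ne_moveLeft {G : PGame.{u}} (i : G.LeftMoves) :
    grundyValue (G.moveLeft i) ≠ grundyValue G := by
  intro h
  have hm := csInf_mem (gvAux_compl G)
  rw [← gvAux_eq] at hm
  exact hm ⟨i, h⟩

theorem exists_grundyValue_moveLeft_of_lt {G : PGame.{u}} {o : Nimber.{u}}
    (h : o < grundyValue G) : ∃ i, grundyValue (G.moveLeft i) = o := by
  by_contra hc
  have hle : grundyValueAux G ≤ (o : Ordinal.{u}) := by
    rw [gvAux_eq]
    exact csInf_le' (fun ⟨i, hi⟩ => hc ⟨i, hi⟩)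
  exact absurd h (not_lt_of_ge hle)

theorem grundyValue_le_of_forall_moveLeft {G : PGame.{u}} {o : Nimber.{u}}
    (h : ∀ i, grundyValue (G.moveLeft i) ≠ o) : grundyValue G ≤ o := by
  have hle : grundyValueAux G ≤ (o : Ordinal.{u}) := by
    rw [gvAux_eq]
    exact csInf_le' (fun ⟨i, hi⟩ => h i hi)
  exact hle

section OJProof

variable {S : Type} [PartialOrder S]

private lemma acc_transGen' {A : Type _} {r : A → A → Prop} {a : A} (h : Acc r a) :
    Acc (Relation.TransGen r) a := by
  induction h with
  | intro x hx ih =>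
    constructor
    intro y hy
    cases hy with
    | single h => exact ih _ h
    | tail h1 h2 => exact (ih _ h2).inv h1

private lemma ojoin_acc_eq (x : S → PGame) (h : Acc OJRel x) :
    ojoin x = PGame.mk (Σ i₀ : S, (x i₀).LeftMoves) (Σ i₀ : S, (x i₀).RightMoves)
      (fun p => ojoin (ojNextL x p.1 p.2)) (fun p => ojoin (ojNextR x p.1 p.2)) := by
  have hx : ojoin x = ojoinAcc x h := dif_pos h
  rw [hx]
  cases h with
  | intro _x h' =>
    have key : ojoinAcc x (Acc.intro x h') = PGame.mk (Σ i₀ : S, (x i₀).LeftMoves)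
        (Σ i₀ : S, (x i₀).RightMoves)
        (fun p => ojoinAcc (ojNextL x p.1 p.2) (h' _ (ojrel_L x p.1 p.2)))
        (fun p => ojoinAcc (ojNextR x p.1 p.2) (h' _ (ojrel_R x p.1 p.2))) := rfl
    rw [key]
    have hL : (fun p : Σ i₀ : S, (x i₀).LeftMoves => ojoin (ojNextL x p.1 p.2))
        = fun p => ojoinAcc _ (h' _ (ojrel_L x p.1 p.2)) :=
      funext fun p => dif_pos _
    have hR : (fun p : Σ i₀ : S, (x i₀).RightMoves => ojoin (ojNextR x p.1 p.2))
        = fun p => ojoinAcc _ (h' _ (ojrel_R x p.1 p.2)) :=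
      funext fun p => dif_pos _
    rw [hL, hR]

private lemma ojNextL_self (x : S → PGame) (i₀ : S) (j : (x i₀).LeftMoves) :
    ojNextL x i₀ j i₀ = (x i₀).moveLeft j := if_pos rfl

private lemma ojNextL_of_lt (x : S → PGame) (i₀ : S) (j : (x i₀).LeftMoves) {i : S}
    (h : i₀ < i) : ojNextL x i₀ j i = 0 := by
  have hne : i ≠ i₀ := fun e => absurd (e ▸ h) (lt_irrefl _)
  simp only [ojNextL]
  rw [if_neg hne, if_pos h]

private lemma ojNextL_of_not (x : S → PGame) (i₀ : S) (j : (x i₀).LeftMoves) {i : S}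
    (hne : i ≠ i₀) (h : ¬ i₀ < i) : ojNextL x i₀ j i = x i := by
  simp only [ojNextL]
  rw [if_neg hne, if_neg h]

private lemma moveLeft_cast {A B : PGame} (h : B = A) (j : A.LeftMoves) :
    B.moveLeft (cast (congrArg PGame.LeftMoves h.symm) j) = A.moveLeft j := by
  subst h; rfl

private lemma noMoveZero {G : PGame} (h : G = 0) (j : G.LeftMoves) : False := by
  subst h; exact PEmpty.elim j

/-- The symmetry invariant maintained during play. -/
private def OJSym (σ : S → S) (x : S → PGame) : Prop :=
  ∀ i : S, grundySet (x i) = grundySet (x (σ i)) ∨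
    (grundyValue (x i) = grundyValue (x (σ i)) ∧ ∀ j, (i < j ∨ σ i < j) → x j = 0)

variable {σ : S → S}

private lemma sigma_mem_upper (hw : WeaklyOrderPreserving σ) {i j : S}
    (h : i < j ∨ σ i < j) : i < σ j ∨ σ i < σ j := by
  have hm : σ j ∈ σ '' {k | i < k ∨ σ i < k} := ⟨j, h, rfl⟩
  rw [hw i] at hm; exact hm

private lemma not_lt_sigma (hinv : ∀ i, σ (σ i) = i) (hw : WeaklyOrderPreserving σ)
    (i : S) : ¬ i < σ i := by
  intro hlt
  have h2 := sigma_mem_upper hw (Or.inl hlt : i < σ i ∨ σ i < σ i)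
  rw [hinv i] at h2
  rcases h2 with h | h
  · exact lt_irrefl i h
  · exact lt_irrefl _ (h.trans hlt)

private lemma not_sigma_lt (hinv : ∀ i, σ (σ i) = i) (hw : WeaklyOrderPreserving σ)
    (i : S) : ¬ σ i < i := fun h => by
  have h2 := not_lt_sigma hinv hw (σ i)
  rw [hinv i] at h2; exact h2 h

/-- Reply in the opposite component: the case where we can match the Grundy value there. -/
private lemma reply_opposite (hinv : ∀ i, σ (σ i) = i) (hw : WeaklyOrderPreserving σ)
    (hfree : ∀ i, σ i ≠ i) (x : S → PGame) (hsx : OJSym σ x) (i₀ : S)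
    (j : (x i₀).LeftMoves) (j' : (x (σ i₀)).LeftMoves)
    (hmatch : grundyValue ((x (σ i₀)).moveLeft j') = grundyValue ((x i₀).moveLeft j)) :
    ∃ (k : S) (j₂ : ((ojNextL x i₀ j) k).LeftMoves),
      OJSym σ (ojNextL (ojNextL x i₀ j) k j₂) := by
  set y := ojNextL x i₀ j with hydef
  have hy : y (σ i₀) = x (σ i₀) := ojNextL_of_not x i₀ j (hfree i₀) (not_lt_sigma hinv hw i₀)
  refine ⟨σ i₀, cast (congrArg PGame.LeftMoves hy.symm) j', ?_⟩
  set j₂ : (y (σ i₀)).LeftMoves := cast (congrArg PGame.LeftMoves hy.symm) j' with hj₂def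
  have hmv : (y (σ i₀)).moveLeft j₂ = (x (σ i₀)).moveLeft j' := moveLeft_cast hy j'
  set z := ojNextL y (σ i₀) j₂ with hzdef
  have hz_i0 : z i₀ = (x i₀).moveLeft j := by
    rw [hzdef, ojNextL_of_not y (σ i₀) j₂ (Ne.symm (hfree i₀)) (not_sigma_lt hinv hw i₀),
      hydef, ojNextL_self]
  have hz_si0 : z (σ i₀) = (x (σ i₀)).moveLeft j' := by
    rw [hzdef, ojNextL_self, hmv]
  have hz_other_lt : ∀ i, (i₀ < i ∨ σ i₀ < i) → z i = 0 := by
    intro i h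
    rcases h with h | h
    · have hne : i ≠ σ i₀ := fun e => not_lt_sigma hinv hw i₀ (e ▸ h)
      by_cases hs : σ i₀ < i
      · rw [hzdef, ojNextL_of_lt _ _ _ hs]
      · rw [hzdef, ojNextL_of_not _ _ _ hne hs, hydef, ojNextL_of_lt _ _ _ h]
    · rw [hzdef, ojNextL_of_lt _ _ _ h]
  have hz_other : ∀ i, i ≠ i₀ → i ≠ σ i₀ → ¬(i₀ < i ∨ σ i₀ < i) → z i = x i := by
    intro i h1 h2 hU
    push_neg at hU
    rw [hzdef, ojNextL_of_not _ _ _ h2 hU.2, hydef, ojNextL_of_not _ _ _ h1 hU.1]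
  intro i
  by_cases hi1 : i = i₀
  · rw [hi1]
    right
    refine ⟨by rw [hz_i0, hz_si0, hmatch], fun k hk => hz_other_lt k hk⟩
  by_cases hi2 : i = σ i₀
  · rw [hi2]
    right
    constructor
    · rw [hinv i₀, hz_i0, hz_si0, hmatch]
    · intro k hk
      rw [hinv i₀] at hk
      exact hz_other_lt k hk.symm
  · have hsi1 : σ i ≠ i₀ := fun e => hi2 (by rw [← e, hinv i])
    have hsi2 : σ i ≠ σ i₀ := fun e => hi1 (by
      have := congrArg σ e
      rwa [hinv, hinv] at this)
    by_cases hU : i₀ < i ∨ σ i₀ < i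
    · have hUs : i₀ < σ i ∨ σ i₀ < σ i := sigma_mem_upper hw hU
      left
      rw [hz_other_lt i hU, hz_other_lt (σ i) hUs]
    · have hUs : ¬ (i₀ < σ i ∨ σ i₀ < σ i) := fun h => hU (by
        have := sigma_mem_upper hw h
        rwa [hinv] at this)
      have e1 := hz_other i hi1 hi2 hU
      have e2 := hz_other (σ i) hsi1 hsi2 hUs
      rcases hsx i with h | ⟨hval, hzr⟩
      · left; rw [e1, e2]; exact h
      · right
        refine ⟨by rw [e1, e2]; exact hval, ?_⟩
        intro k hk
        have hx0 := hzr k hk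
        by_cases hk1 : k = i₀
        · exact absurd (hk1 ▸ hx0) (fun h0 => noMoveZero h0 j)
        by_cases hk2 : k = σ i₀
        · exact absurd (hk2 ▸ hx0) (fun h0 => noMoveZero h0 j')
        by_cases hkU : i₀ < k ∨ σ i₀ < k
        · exact hz_other_lt k hkU
        · rw [hz_other k hk1 hk2 hkU]; exact hx0

/-- Reply in the same component: the case where the mover raised the Grundy value. -/
private lemma reply_same (hinv : ∀ i, σ (σ i) = i) (hw : WeaklyOrderPreserving σ)
    (hfree : ∀ i, σ i ≠ i) (x : S → PGame) (hsx : OJSym σ x) (i₀ : S)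
    (j : (x i₀).LeftMoves)
    (hval : grundyValue (x i₀) = grundyValue (x (σ i₀)))
    (hzr : ∀ k, (i₀ < k ∨ σ i₀ < k) → x k = 0)
    (hlt : grundyValue (x (σ i₀)) < grundyValue ((x i₀).moveLeft j)) :
    ∃ (k : S) (j₂ : ((ojNextL x i₀ j) k).LeftMoves),
      OJSym σ (ojNextL (ojNextL x i₀ j) k j₂) := by
  set y := ojNextL x i₀ j with hydef
  have hyi0 : y i₀ = (x i₀).moveLeft j := ojNextL_self x i₀ j
  have hlt' : grundyValue (x (σ i₀)) < grundyValue (y i₀) := by rw [hyi0]; exact hlt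
  obtain ⟨j₂, hj₂⟩ := exists_grundyValue_moveLeft_of_lt hlt'
  refine ⟨i₀, j₂, ?_⟩
  set z := ojNextL y i₀ j₂ with hzdef
  have hz_i0 : grundyValue (z i₀) = grundyValue (x (σ i₀)) := by
    rw [hzdef, ojNextL_self]; exact hj₂
  have hz_ne : ∀ i, i ≠ i₀ → z i = x i := by
    intro i h1
    by_cases h : i₀ < i
    · rw [hzdef, ojNextL_of_lt _ _ _ h, hzr i (Or.inl h)]
    · rw [hzdef, ojNextL_of_not _ _ _ h1 h, hydef, ojNextL_of_not _ _ _ h1 h]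
  intro i
  by_cases hi1 : i = i₀
  · rw [hi1]
    right
    constructor
    · rw [hz_i0, hz_ne (σ i₀) (hfree i₀)]
    · intro k hk
      have hk1 : k ≠ i₀ := by
        rintro rfl
        rcases hk with h | h
        · exact lt_irrefl _ h
        · exact not_sigma_lt hinv hw k h
      rw [hz_ne k hk1]
      exact hzr k hk
  by_cases hi2 : i = σ i₀
  · rw [hi2]
    right
    constructor
    · rw [hinv i₀, hz_i0, hz_ne (σ i₀) (hfree i₀)]
    · intro k hk
      rw [hinv i₀] at hk
      have hk1 : k ≠ i₀ := by
        rintro rfl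
        rcases hk with h | h
        · exact not_sigma_lt hinv hw k h
        · exact lt_irrefl _ h
      rw [hz_ne k hk1]
      exact hzr k hk.symm
  · have hsi1 : σ i ≠ i₀ := fun e => hi2 (by rw [← e, hinv i])
    have e1 := hz_ne i hi1
    have e2 := hz_ne (σ i) hsi1
    rcases hsx i with h | ⟨hval2, hzr2⟩
    · left; rw [e1, e2]; exact h
    · right
      refine ⟨by rw [e1, e2]; exact hval2, ?_⟩
      intro k hk
      have hx0 := hzr2 k hk
      by_cases hk1 : k = i₀
      · exact absurd (hk1 ▸ hx0) (fun h0 => noMoveZero h0 j)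
      · rw [hz_ne k hk1]; exact hx0

private lemma exists_reply (hinv : ∀ i, σ (σ i) = i) (hw : WeaklyOrderPreserving σ)
    (hfree : ∀ i, σ i ≠ i) (x : S → PGame) (hsx : OJSym σ x) (i₀ : S)
    (j : (x i₀).LeftMoves) :
    ∃ (k : S) (j₂ : ((ojNextL x i₀ j) k).LeftMoves),
      OJSym σ (ojNextL (ojNextL x i₀ j) k j₂) := by
  rcases hsx i₀ with hset | ⟨hval, hzr⟩
  · have hmem : grundyValue ((x i₀).moveLeft j) ∈ grundySet (x i₀) := ⟨j, rfl⟩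
    rw [hset] at hmem
    obtain ⟨j', hj'⟩ := hmem
    exact reply_opposite hinv hw hfree x hsx i₀ j j' hj'
  · have hne : grundyValue ((x i₀).moveLeft j) ≠ grundyValue (x i₀) :=
      grundyValue_ne_moveLeft j
    rcases lt_or_gt_of_ne hne with hlt | hgt
    · have hlt' : grundyValue ((x i₀).moveLeft j) < grundyValue (x (σ i₀)) := hval ▸ hlt
      obtain ⟨j', hj'⟩ := exists_grundyValue_moveLeft_of_lt hlt'
      exact reply_opposite hinv hw hfree x hsx i₀ j j' hj'
    · have hlt' : grundyValue (x (σ i₀)) < grundyValue ((x i₀).moveLeft j) := hval ▸ hgt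
      exact reply_same hinv hw hfree x hsx i₀ j hval hzr hlt'

private lemma key_lemma (hinv : ∀ i, σ (σ i) = i) (hw : WeaklyOrderPreserving σ)
    (hfree : ∀ i, σ i ≠ i) :
    ∀ x : S → PGame, Acc (Relation.TransGen OJRel) x → OJSym σ x →
      grundyValue (ojoin x) = 0 := by
  intro x hacc
  induction hacc with
  | intro x hx ih =>
    intro hsx
    have haccx : Acc OJRel x :=
      Subrelation.accessible (fun h => Relation.TransGen.single h) (Acc.intro x hx)
    rw [ojoin_acc_eq x haccx]
    refine le_antisymm (grundyValue_le_of_forall_moveLeft ?_)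
      (not_lt.1 (Nimber.not_lt_zero _))
    rintro ⟨i₀, j⟩
    show grundyValue (ojoin (ojNextL x i₀ j)) ≠ 0
    set y := ojNextL x i₀ j with hydef
    obtain ⟨k, j₂, hz⟩ := exists_reply hinv hw hfree x hsx i₀ j
    have haccy : Acc OJRel y := haccx.inv (ojrel_L x i₀ j)
    have h0 : grundyValue (ojoin (ojNextL y k j₂)) = 0 :=
      ih (ojNextL y k j₂)
        (Relation.TransGen.head (ojrel_L y k j₂)
          (Relation.TransGen.single (ojrel_L x i₀ j))) hz
    intro hy0
    rw [ojoin_acc_eq y haccy] at hy0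
    have hne := grundyValue_ne_moveLeft
      (G := PGame.mk (Σ i : S, (y i).LeftMoves) (Σ i : S, (y i).RightMoves)
        (fun p => ojoin (ojNextL y p.1 p.2)) (fun p => ojoin (ojNextR y p.1 p.2)))
      ⟨k, j₂⟩
    exact hne (h0.trans hy0.symm)

end OJProof

/-- mirror symmetry, fixed-point free case: if `σ` is a fixed-point free weakly
order-preserving involution of `S` with `Γ₁(G i) = Γ₁(G (σ i))` for all `i`, then
`Γ₀(S ⋈ G) = 0`, i.e. the ordered join is a previous-player win. -/
theorem ojoin_symmetry_zero {S : Type} [PartialOrder S] (G : S → PGame)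
    (hI : ∀ i, (G i).Impartial) (hG : Acc OJRel G)
    (σ : S → S) (hinv : σ ∘ σ = id) (hw : WeaklyOrderPreserving σ)
    (hfree : ∀ i, σ i ≠ i)
    (hsym : ∀ i, grundySet (G i) = grundySet (G (σ i))) :
    grundyValue (ojoin G) = 0 := by
  have hinv' : ∀ i, σ (σ i) = i := fun i => congrFun hinv i
  exact key_lemma hinv' hw hfree G (acc_transGen' hG) (fun i => Or.inl (hsym i))
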